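/- Strong convexity of squared p-norm: for p ∈ (1, 2], the function x ↦ (1/2)‖x‖_p² on ℝ^d is (p−1)-strongly convex with respect to the norm ‖·‖_p, i.e., for all x, y and t ∈ [0,1], (1/2)‖tx + (1−t)y‖_p² ≤ t(1/2)‖x‖_p² + (1−t)(1/2)‖y‖_p² − ((p−1)/2)t(1−t)‖x−y‖_p². -/

import Mathlib

/-- The ℓ_p norm on `ℝ^d`. -/
noncomputable def pNorm {d : ℕ} (p : ℝ) (x : Fin d → ℝ) : ℝ :=
  (∑ i, |x i| ^ p) ^ (1 / p)

open Real Set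

lemma ineqA {s : ℝ} (hs0 : 0 < s) (hs1 : s ≤ 1) {r : ℝ} (hr0 : 0 ≤ r) (hr1 : r ≤ 1) :
    (1 - r) ^ s * (1 + s * r) ≤ (1 + r) ^ s * (1 - s * r) := by
  set F : ℝ → ℝ := fun r => (1 + r) ^ s * (1 - s * r) - (1 - r) ^ s * (1 + s * r) with hF
  have hcont : Continuous F := by
    have h1 : Continuous fun r : ℝ => (1 + r) ^ s := by
      apply continuous_iff_continuousAt.2
      intro a
      exact (Real.continuousAt_rpow_const _ _ (Or.inr hs0.le)).comp (by fun_prop)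
    have h2 : Continuous fun r : ℝ => (1 - r) ^ s := by
      apply continuous_iff_continuousAt.2
      intro a
      exact (Real.continuousAt_rpow_const _ _ (Or.inr hs0.le)).comp (by fun_prop)
    fun_prop
  have hderiv : ∀ x ∈ Ioo (0:ℝ) 1, HasDerivAt F
      (s * ((1 + x) ^ (s-1) * (1 - s * x)) - (1 + x) ^ s * s
        - (s * (-((1 - x) ^ (s-1))) * (1 + s * x) + (1 - x) ^ s * s)) x := by
    intro x hx
    have hx0 : (0:ℝ) < 1 + x := by linarith [hx.1]
    have hx1 : (0:ℝ) < 1 - x := by linarith [hx.2]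
    have d1 : HasDerivAt (fun r : ℝ => (1 + r) ^ s) (s * (1 + x) ^ (s-1)) x := by
      have := (HasDerivAt.rpow_const (p := s) (hasDerivAt_id x |>.const_add 1)
        (Or.inl hx0.ne'))
      simpa using this
    have d2 : HasDerivAt (fun r : ℝ => (1 - r) ^ s) (s * (-((1 - x) ^ (s-1)))) x := by
      have h := (HasDerivAt.rpow_const (p := s) ((hasDerivAt_id x).const_sub 1)
        (Or.inl hx1.ne'))
      simpa [mul_comm] using h
    have e1 : HasDerivAt (fun r : ℝ => 1 - s * r) (-s) x := by
      simpa using ((hasDerivAt_id x).const_mul s).const_sub 1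
    have e2 : HasDerivAt (fun r : ℝ => 1 + s * r) s x := by
      simpa using ((hasDerivAt_id x).const_mul s).const_add 1
    have := ((d1.mul e1).sub (d2.mul e2))
    refine this.congr_deriv ?_
    ring
  have hmono : MonotoneOn F (Icc (0:ℝ) 1) := by
    apply monotoneOn_of_deriv_nonneg (convex_Icc 0 1) hcont.continuousOn
    · intro x hx
      rw [interior_Icc] at hx
      exact (hderiv x hx).differentiableAt.differentiableWithinAt
    · intro x hx
      rw [interior_Icc] at hx
      rw [(hderiv x hx).deriv]
      have hx0 : (0:ℝ) < 1 + x := by linarith [hx.1]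
      have hx1 : (0:ℝ) < 1 - x := by linarith [hx.2]
      have key : (1 + x) ^ (s-1) ≤ (1 - x) ^ (s-1) :=
        Real.rpow_le_rpow_of_nonpos hx1 (by linarith [hx.1]) (by linarith)
      have e1 : (1 + x) ^ s = (1 + x) ^ (s-1) * (1 + x) := by
        rw [← Real.rpow_add_one hx0.ne']; ring_nf
      have e2 : (1 - x) ^ s = (1 - x) ^ (s-1) * (1 - x) := by
        rw [← Real.rpow_add_one hx1.ne']; ring_nf
      rw [e1, e2]
      have hxx : 0 < x := hx.1
      nlinarith [mul_nonneg (mul_nonneg hs0.le hxx.le) (sub_nonneg.2 key)]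
  have h0 : F 0 = 0 := by simp [hF]
  have := hmono (left_mem_Icc.2 zero_le_one) (mem_Icc.2 ⟨hr0, hr1⟩) hr0
  rw [h0] at this
  simpa [hF, sub_nonneg] using this

lemma ineqB {p : ℝ} (hp1 : 1 < p) (hp2 : p ≤ 2) {r : ℝ} (hr0 : 0 ≤ r) (hr1 : r ≤ 1) :
    (1 + (p-1) * r^2) ^ (p/2) ≤ ((1 + r) ^ p + (1 - r) ^ p) / 2 := by
  set g : ℝ → ℝ := fun r => ((1 + r) ^ p + (1 - r) ^ p) / 2 with hg
  set h : ℝ → ℝ := fun r => (1 + (p-1) * r^2) ^ (p/2) with hh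
  have hb : ∀ x : ℝ, (1:ℝ) ≤ 1 + (p-1) * x^2 := fun x => by nlinarith
  have hbpos : ∀ x : ℝ, (0:ℝ) < 1 + (p-1) * x^2 := fun x => lt_of_lt_of_le one_pos (hb x)
  have hhpos : ∀ x : ℝ, 0 < h x := fun x => Real.rpow_pos_of_pos (hbpos x) _
  have hgc : Continuous g := by
    have h1 : Continuous fun r : ℝ => (1 + r) ^ p := continuous_iff_continuousAt.2 fun a =>
      (Real.continuousAt_rpow_const _ _ (Or.inr (by linarith))).comp (by fun_prop)
    have h2 : Continuous fun r : ℝ => (1 - r) ^ p := continuous_iff_continuousAt.2 fun a =>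
      (Real.continuousAt_rpow_const _ _ (Or.inr (by linarith))).comp (by fun_prop)
    fun_prop
  have hhc : Continuous h := continuous_iff_continuousAt.2 fun a =>
    ContinuousAt.rpow_const (by fun_prop) (Or.inl (hbpos a).ne')
  have hgd : ∀ x ∈ Ioo (0:ℝ) 1, HasDerivAt g
      ((p * (1 + x) ^ (p-1) - p * (1 - x) ^ (p-1)) / 2) x := by
    intro x hx
    have hx0 : (0:ℝ) < 1 + x := by linarith [hx.1]
    have hx1 : (0:ℝ) < 1 - x := by linarith [hx.2]
    have d1 : HasDerivAt (fun r : ℝ => (1 + r) ^ p) (p * (1 + x) ^ (p-1)) x := by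
      simpa using (HasDerivAt.rpow_const (p := p) (hasDerivAt_id x |>.const_add 1)
        (Or.inl hx0.ne'))
    have d2 : HasDerivAt (fun r : ℝ => (1 - r) ^ p) (-(p * (1 - x) ^ (p-1))) x := by
      have := (HasDerivAt.rpow_const (p := p) ((hasDerivAt_id x).const_sub 1)
        (Or.inl hx1.ne'))
      simpa [mul_comm] using this
    have := (d1.add d2).div_const 2
    refine this.congr_deriv ?_
    ring
  have hhd : ∀ x ∈ Ioo (0:ℝ) 1, HasDerivAt h
      (p * (p-1) * x * (1 + (p-1) * x^2) ^ (p/2 - 1)) x := by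
    intro x hx
    have db : HasDerivAt (fun r : ℝ => 1 + (p-1) * r^2) (2 * (p-1) * x) x := by
      have : HasDerivAt (fun r : ℝ => r^2) (2*x) x := by
        simpa using hasDerivAt_pow 2 x
      simpa [mul_comm, mul_assoc, mul_left_comm] using (this.const_mul (p-1)).const_add 1
    have := HasDerivAt.rpow_const (p := p/2) db (Or.inl (hbpos x).ne')
    convert this using 1
    ring
  have hmono : MonotoneOn (fun r => g r / h r) (Icc (0:ℝ) 1) := by
    apply monotoneOn_of_deriv_nonneg (convex_Icc 0 1) (hgc.div hhc fun x => (hhpos x).ne').continuousOn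
    · intro x hx
      rw [interior_Icc] at hx
      exact (((hgd x hx).div (hhd x hx) (hhpos x).ne')).differentiableAt.differentiableWithinAt
    · intro x hx
      rw [interior_Icc] at hx
      show 0 ≤ deriv (fun y => g y / h y) x
      rw [show deriv (fun y => g y / h y) x = _ from ((hgd x hx).div (hhd x hx) (hhpos x).ne').deriv]
      apply div_nonneg _ (sq_nonneg _)
      have hx0 : (0:ℝ) < 1 + x := by linarith [hx.1]
      have hx1 : (0:ℝ) < 1 - x := by linarith [hx.2]
      have key : (1 - x) ^ (p-1) * (1 + (p-1) * x) ≤ (1 + x) ^ (p-1) * (1 - (p-1) * x) :=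
        ineqA (by linarith) (by linarith) hx.1.le hx.2.le
      have e1 : (1 + x) ^ p = (1 + x) ^ (p-1) * (1 + x) := by
        rw [← Real.rpow_add_one hx0.ne']; ring_nf
      have e2 : (1 - x) ^ p = (1 - x) ^ (p-1) * (1 - x) := by
        rw [← Real.rpow_add_one hx1.ne']; ring_nf
      have e3 : h x = (1 + (p-1) * x^2) ^ (p/2 - 1) * (1 + (p-1) * x^2) := by
        rw [hh, ← Real.rpow_add_one (hbpos x).ne']; ring_nf
      have hbp : (0:ℝ) ≤ (1 + (p-1) * x^2) ^ (p/2 - 1) := Real.rpow_nonneg (hbpos x).le _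
      rw [hg]
      simp only [e3]
      rw [sub_nonneg]
      have expand : ((1 + x) ^ p + (1 - x) ^ p) / 2 * (p * (p - 1) * x * (1 + (p - 1) * x ^ 2) ^ (p / 2 - 1)) =
          (p/2) * (1 + (p-1) * x^2) ^ (p/2 - 1) * ((p-1) * x * ((1+x)^(p-1) * (1+x) + (1-x)^(p-1) * (1-x))) := by
        rw [e1, e2]; ring
      have expand2 : (p * (1 + x) ^ (p - 1) - p * (1 - x) ^ (p - 1)) / 2 *
            ((1 + (p - 1) * x ^ 2) ^ (p / 2 - 1) * (1 + (p - 1) * x ^ 2)) =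
          (p/2) * (1 + (p-1) * x^2) ^ (p/2 - 1) *
            (((1+x)^(p-1) - (1-x)^(p-1)) * (1 + (p-1) * x^2)) := by
        ring
      rw [expand, expand2]
      apply mul_le_mul_of_nonneg_left _ (by positivity)
      nlinarith [key]
  have h0 : g 0 / h 0 = 1 := by
    rw [hg, hh]
    norm_num [Real.one_rpow]
  have hle := hmono (left_mem_Icc.2 zero_le_one) (mem_Icc.2 ⟨hr0, hr1⟩) hr0
  simp only [] at hle
  rw [h0] at hle
  exact (one_le_div (hhpos r)).1 hle

lemma scalarBCL_aux {p : ℝ} (hp1 : 1 < p) (hp2 : p ≤ 2) {a b : ℝ} (hb : 0 ≤ b) (hba : b ≤ a) :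
    a^2 + (p-1)*b^2 ≤ ((|a+b| ^ p + |a-b| ^ p)/2) ^ (2/p) := by
  have hp0 : (0:ℝ) < p := by linarith
  have ha : 0 ≤ a := hb.trans hba
  rcases ha.eq_or_lt with h0 | ha
  · have hb0 : b = 0 := le_antisymm (h0 ▸ hba) hb
    rw [← h0, hb0]
    norm_num [Real.zero_rpow hp0.ne', Real.zero_rpow (by positivity : 2/p ≠ 0)]
  · set r := b / a with hr
    have hr0 : 0 ≤ r := div_nonneg hb ha.le
    have hr1 : r ≤ 1 := (div_le_one ha).2 hba
    have hB := ineqB hp1 hp2 hr0 hr1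
    have base_pos : (0:ℝ) < 1 + (p-1)*r^2 := by nlinarith
    have hXnn : (0:ℝ) ≤ ((1 + r) ^ p + (1 - r) ^ p)/2 := by
      have := Real.rpow_nonneg (by linarith : (0:ℝ) ≤ 1 + r) p
      have := Real.rpow_nonneg (by linarith : (0:ℝ) ≤ 1 - r) p
      linarith
    have step1 : 1 + (p-1)*r^2 ≤ (((1 + r) ^ p + (1 - r) ^ p)/2) ^ (2/p) := by
      have h1 : ((1 + (p-1)*r^2) ^ (p/2)) ^ (2/p) = 1 + (p-1)*r^2 := by
        rw [← Real.rpow_mul base_pos.le, show p/2*(2/p) = 1 by field_simp, Real.rpow_one]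
      calc 1 + (p-1)*r^2 = ((1 + (p-1)*r^2) ^ (p/2)) ^ (2/p) := h1.symm
        _ ≤ _ := Real.rpow_le_rpow (Real.rpow_nonneg base_pos.le _) hB (by positivity)
    have step2 := mul_le_mul_of_nonneg_left step1 (sq_nonneg a)
    have eL : a^2 * (1 + (p-1)*r^2) = a^2 + (p-1)*b^2 := by
      rw [hr]; field_simp
    have ha2 : a^2 = (a^p) ^ (2/p) := by
      rw [← Real.rpow_mul ha.le, show p*(2/p) = ((2:ℕ):ℝ) by push_cast; field_simp,
        Real.rpow_natCast]
    have eR : a^2 * (((1 + r) ^ p + (1 - r) ^ p)/2) ^ (2/p) =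
        ((|a+b| ^ p + |a-b| ^ p)/2) ^ (2/p) := by
      rw [ha2, ← Real.mul_rpow (Real.rpow_nonneg ha.le _) hXnn]
      congr 1
      have e1 : a^p * (1 + r)^p = (a+b)^p := by
        rw [← Real.mul_rpow ha.le (by linarith : (0:ℝ) ≤ 1 + r)]
        congr 1
        rw [hr]
        field_simp
      have e2 : a^p * (1 - r)^p = (a-b)^p := by
        rw [← Real.mul_rpow ha.le (by linarith : (0:ℝ) ≤ 1 - r)]
        congr 1
        rw [hr]
        field_simp
      rw [abs_of_nonneg (by linarith : (0:ℝ) ≤ a + b), abs_of_nonneg (by linarith : (0:ℝ) ≤ a - b),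
        ← mul_div_assoc]
      congr 1
      rw [mul_add, e1, e2]
    rw [eL, eR] at step2
    exact step2

lemma abs_pair (a b : ℝ) :
    (|a+b| = |a|+|b| ∧ |a-b| = |(|a|)-(|b|)|) ∨ (|a+b| = |(|a|)-(|b|)| ∧ |a-b| = |a|+|b|) := by
  rcases le_total 0 a with ha | ha <;> rcases le_total 0 b with hb | hb
  · left
    rw [abs_of_nonneg ha, abs_of_nonneg hb, abs_of_nonneg (by linarith : (0:ℝ) ≤ a + b)]
    exact ⟨rfl, rfl⟩
  · right
    rw [abs_of_nonneg ha, abs_of_nonpos hb, abs_of_nonneg (by linarith : (0:ℝ) ≤ a - b)]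
    constructor
    · congr 1; ring
    · ring
  · right
    rw [abs_of_nonpos ha, abs_of_nonneg hb, abs_of_nonpos (by linarith : a - b ≤ 0)]
    constructor
    · rw [show (-a) - b = -(a+b) by ring, abs_neg]
    · ring
  · left
    rw [abs_of_nonpos ha, abs_of_nonpos hb, abs_of_nonpos (by linarith : a + b ≤ 0)]
    constructor
    · ring
    · rw [show (-a) - -b = -(a-b) by ring, abs_neg]

lemma scalarBCL {p : ℝ} (hp1 : 1 < p) (hp2 : p ≤ 2) (a b : ℝ) :
    a^2 + (p-1)*b^2 ≤ ((|a+b| ^ p + |a-b| ^ p)/2) ^ (2/p) := by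
  have main : ∀ a b : ℝ, |b| ≤ |a| → a^2 + (p-1)*b^2 ≤ ((|a+b| ^ p + |a-b| ^ p)/2) ^ (2/p) := by
    intro a b hab
    have haux := scalarBCL_aux hp1 hp2 (abs_nonneg b) hab
    have habs : |(|a| + |b|)| = |a| + |b| := abs_of_nonneg (by positivity)
    rw [habs, sq_abs, sq_abs] at haux
    rcases abs_pair a b with ⟨h1, h2⟩ | ⟨h1, h2⟩
    · rwa [← h1, ← h2] at haux
    · rwa [← h1, ← h2, add_comm (|a-b| ^ p)] at haux
  rcases le_total (|b|) (|a|) with h | h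
  · exact main a b h
  · have h2 := main b a h
    rw [add_comm b a, abs_sub_comm b a] at h2
    have hsq : a^2 ≤ b^2 := by
      rw [← sq_abs a, ← sq_abs b]
      exact pow_le_pow_left₀ (abs_nonneg a) h 2
    nlinarith

lemma my_rpow_rpow_inv {r : ℝ} (hr : r ≠ 0) {Z : ℝ} (hZ : 0 ≤ Z) : (Z ^ (1/r)) ^ r = Z := by
  rw [← Real.rpow_mul hZ, one_div, inv_mul_cancel₀ hr, Real.rpow_one]

lemma my_rpow_inv_rpow {r : ℝ} (hr : r ≠ 0) {Z : ℝ} (hZ : 0 ≤ Z) : (Z ^ r) ^ (1/r) = Z := by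
  rw [← Real.rpow_mul hZ, one_div, mul_inv_cancel₀ hr, Real.rpow_one]

lemma superadd {d : ℕ} {r : ℝ} (hr0 : 0 < r) (hr1 : r ≤ 1) (u v : Fin d → ℝ)
    (hu : ∀ i, 0 ≤ u i) (hv : ∀ i, 0 ≤ v i) :
    (∑ i, (u i) ^ r) ^ (1/r) + (∑ i, (v i) ^ r) ^ (1/r) ≤ (∑ i, (u i + v i) ^ r) ^ (1/r) := by
  have hZu : (0:ℝ) ≤ ∑ i, (u i) ^ r := Finset.sum_nonneg fun i _ => Real.rpow_nonneg (hu i) r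
  have hZv : (0:ℝ) ≤ ∑ i, (v i) ^ r := Finset.sum_nonneg fun i _ => Real.rpow_nonneg (hv i) r
  set S := (∑ i, (u i) ^ r) ^ (1/r) with hS
  set T := (∑ i, (v i) ^ r) ^ (1/r) with hT
  have hSnn : 0 ≤ S := Real.rpow_nonneg hZu _
  have hTnn : 0 ≤ T := Real.rpow_nonneg hZv _
  have zero_case : ∀ w : Fin d → ℝ, (∀ i, 0 ≤ w i) → (∑ i, (w i) ^ r) ^ (1/r) = 0 →
      ∀ i, w i = 0 := by
    intro w hw h0
    have hZ : (∑ i, (w i) ^ r) = 0 := by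
      have h2 := congrArg (fun Z : ℝ => Z ^ r) h0
      simpa only [my_rpow_rpow_inv hr0.ne'
        (Finset.sum_nonneg fun i _ => Real.rpow_nonneg (hw i) r),
        Real.zero_rpow hr0.ne'] using h2
    intro i
    have hterm : (w i) ^ r = 0 := (Finset.sum_eq_zero_iff_of_nonneg
        (fun j _ => Real.rpow_nonneg (hw j) r)).1 hZ i (Finset.mem_univ i)
    by_contra hne
    have hpos : 0 < w i := lt_of_le_of_ne (hw i) (Ne.symm hne)
    exact absurd hterm (Real.rpow_pos_of_pos hpos r).ne'
  rcases eq_or_lt_of_le hSnn with hS0 | hSpos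
  · have hu0 := zero_case u hu hS0.symm
    have hsum : (∑ i, (u i + v i) ^ r) = ∑ i, (v i) ^ r :=
      Finset.sum_congr rfl fun i _ => by rw [hu0 i, zero_add]
    rw [← hS0, zero_add, hT, hsum]
  rcases eq_or_lt_of_le hTnn with hT0 | hTpos
  · have hv0 := zero_case v hv hT0.symm
    have hsum : (∑ i, (u i + v i) ^ r) = ∑ i, (u i) ^ r :=
      Finset.sum_congr rfl fun i _ => by rw [hv0 i, add_zero]
    rw [← hT0, add_zero, hS, hsum]
  · have hST : 0 < S + T := by linarith
    have hSr : S ^ r = ∑ i, (u i) ^ r := my_rpow_rpow_inv hr0.ne' hZu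
    have hTr : T ^ r = ∑ i, (v i) ^ r := my_rpow_rpow_inv hr0.ne' hZv
    have key : (S + T) ^ r ≤ ∑ i, (u i + v i) ^ r := by
      have pointwise : ∀ i, (S + T) ^ r *
          ((S/(S+T)) * ((u i) ^ r / S ^ r) + (T/(S+T)) * ((v i) ^ r / T ^ r)) ≤
            (u i + v i) ^ r := by
        intro i
        have hcc := (Real.concaveOn_rpow (le_of_lt hr0) hr1).2
          (Set.mem_Ici.2 (div_nonneg (hu i) hSnn)) (Set.mem_Ici.2 (div_nonneg (hv i) hTnn))
          (div_nonneg hSnn hST.le) (div_nonneg hTnn hST.le)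
          (by field_simp)
        simp only [smul_eq_mul] at hcc
        have harg : S/(S+T) * (u i / S) + T/(S+T) * (v i / T) = (u i + v i)/(S+T) := by
          field_simp
        rw [harg, Real.div_rpow (hu i) hSnn, Real.div_rpow (hv i) hTnn] at hcc
        have := mul_le_mul_of_nonneg_left hcc (Real.rpow_nonneg hST.le r)
        refine le_trans this ?_
        rw [← Real.mul_rpow hST.le (div_nonneg (add_nonneg (hu i) (hv i)) hST.le),
          mul_div_cancel₀ _ hST.ne']
      have sum_eq : ∑ i, (S + T) ^ r *
          ((S/(S+T)) * ((u i) ^ r / S ^ r) + (T/(S+T)) * ((v i) ^ r / T ^ r)) =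
          (S + T) ^ r * ((S/(S+T)) * ((∑ i, (u i) ^ r) / S ^ r)
            + (T/(S+T)) * ((∑ i, (v i) ^ r) / T ^ r)) := by
        simp only [mul_add, Finset.sum_add_distrib, ← Finset.mul_sum, ← Finset.sum_div]
      calc (S + T) ^ r = (S + T) ^ r * ((S/(S+T)) * ((∑ i, (u i) ^ r) / S ^ r)
            + (T/(S+T)) * ((∑ i, (v i) ^ r) / T ^ r)) := by
            rw [← hSr, ← hTr, div_self (by positivity : S ^ r ≠ 0),
              div_self (by positivity : T ^ r ≠ 0)]
            field_simp
        _ = ∑ i, (S + T) ^ r *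
            ((S/(S+T)) * ((u i) ^ r / S ^ r) + (T/(S+T)) * ((v i) ^ r / T ^ r)) := sum_eq.symm
        _ ≤ ∑ i, (u i + v i) ^ r := Finset.sum_le_sum fun i _ => pointwise i
    calc S + T = ((S + T) ^ r) ^ (1/r) := (my_rpow_inv_rpow hr0.ne' hST.le).symm
      _ ≤ _ := Real.rpow_le_rpow (Real.rpow_nonneg hST.le r) key (by positivity)

lemma sum_abs_rpow_nonneg {d : ℕ} (p : ℝ) (z : Fin d → ℝ) : (0:ℝ) ≤ ∑ i, |z i| ^ p :=
  Finset.sum_nonneg fun i _ => Real.rpow_nonneg (abs_nonneg _) p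

lemma pNorm_nonneg {d : ℕ} (p : ℝ) (z : Fin d → ℝ) : 0 ≤ pNorm p z :=
  Real.rpow_nonneg (sum_abs_rpow_nonneg p z) _

lemma pNorm_sq' {d : ℕ} {p : ℝ} (hp : 0 < p) (z : Fin d → ℝ) :
    pNorm p z ^ 2 = (∑ i, |z i| ^ p) ^ (2/p) := by
  rw [pNorm, ← Real.rpow_natCast ((∑ i, |z i| ^ p) ^ (1/p)) 2,
    ← Real.rpow_mul (sum_abs_rpow_nonneg p z)]
  congr 1
  push_cast
  field_simp

lemma abs_rpow_eq_sq_rpow {p : ℝ} (hp : 0 < p) (a : ℝ) : |a| ^ p = (a^2) ^ (p/2) := by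
  rw [← sq_abs, ← Real.rpow_natCast |a| 2, ← Real.rpow_mul (abs_nonneg _)]
  congr 1
  push_cast
  ring

lemma pNorm_sq {d : ℕ} {p r : ℝ} (hp : 0 < p) (hrr : r = p/2) (z : Fin d → ℝ) :
    pNorm p z ^ 2 = (∑ i, ((z i)^2) ^ r) ^ (1/r) := by
  subst hrr
  rw [pNorm_sq' hp, one_div_div]
  congr 1
  exact Finset.sum_congr rfl fun i _ => abs_rpow_eq_sq_rpow hp (z i)

lemma midD {d : ℕ} {p : ℝ} (hp1 : 1 < p) (hp2 : p ≤ 2) (x y : Fin d → ℝ) :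
    pNorm p (x + y) ^ 2 + (p-1) * pNorm p (x - y) ^ 2 ≤
      2 * (pNorm p x ^ 2 + pNorm p y ^ 2) := by
  have hp0 : (0:ℝ) < p := by linarith
  set r := p/2 with hr
  have hr0 : 0 < r := by rw [hr]; linarith
  have hr1 : r ≤ 1 := by rw [hr]; linarith
  have h1r : 1/r = 2/p := by rw [hr, one_div_div]
  set u : Fin d → ℝ := fun i => (x i + y i)^2 with hu
  set w : Fin d → ℝ := fun i => (p-1)*(x i - y i)^2 with hw
  have hun : ∀ i, 0 ≤ u i := fun i => sq_nonneg _
  have hwn : ∀ i, 0 ≤ w i := fun i => mul_nonneg (by linarith) (sq_nonneg _)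
  -- rewrite LHS
  have e1 : pNorm p (x + y) ^ 2 = (∑ i, (u i) ^ r) ^ (1/r) := by
    rw [pNorm_sq hp0 hr]
    congr 1
  have e2 : (p-1) * pNorm p (x - y) ^ 2 = (∑ i, (w i) ^ r) ^ (1/r) := by
    rw [pNorm_sq hp0 hr]
    have hsc : ∀ i, (w i) ^ r = (p-1)^r * (((x - y) i)^2) ^ r := fun i => by
      rw [hw]
      simp only [Pi.sub_apply]
      exact Real.mul_rpow (by linarith) (sq_nonneg _)
    rw [Finset.sum_congr rfl fun i _ => hsc i, ← Finset.mul_sum,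
      Real.mul_rpow (Real.rpow_nonneg (by linarith) _)
        (Finset.sum_nonneg fun i _ => Real.rpow_nonneg (sq_nonneg _) _),
      my_rpow_inv_rpow hr0.ne' (by linarith : (0:ℝ) ≤ p - 1)]
  rw [e1, e2]
  -- superadditivity
  have step1 := superadd hr0 hr1 u w hun hwn
  refine le_trans step1 ?_
  -- pointwise domination
  set m : Fin d → ℝ := fun i => ((|2 * x i| ^ p + |2 * y i| ^ p)/2) ^ (2/p) with hm
  have hmn : ∀ i, 0 ≤ m i := fun i => Real.rpow_nonneg (by
    have := Real.rpow_nonneg (abs_nonneg (2 * x i)) p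
    have := Real.rpow_nonneg (abs_nonneg (2 * y i)) p
    linarith) _
  have hpw : ∀ i, u i + w i ≤ m i := by
    intro i
    have h := scalarBCL hp1 hp2 (x i + y i) (x i - y i)
    rw [show x i + y i + (x i - y i) = 2 * x i by ring,
      show x i + y i - (x i - y i) = 2 * y i by ring] at h
    exact h
  have step2 : (∑ i, (u i + w i) ^ r) ^ (1/r) ≤ (∑ i, (m i) ^ r) ^ (1/r) :=
    Real.rpow_le_rpow (Finset.sum_nonneg fun i _ =>
        Real.rpow_nonneg (add_nonneg (hun i) (hwn i)) r)
      (Finset.sum_le_sum fun i _ => Real.rpow_le_rpow (add_nonneg (hun i) (hwn i)) (hpw i) hr0.le)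
      (by positivity)
  refine le_trans step2 ?_
  -- compute the m-norm
  set A := ∑ i, |x i| ^ p with hA
  set B := ∑ i, |y i| ^ p with hB
  have hAn : 0 ≤ A := sum_abs_rpow_nonneg p x
  have hBn : 0 ≤ B := sum_abs_rpow_nonneg p y
  have hmr : ∀ i, (m i) ^ r = (|2 * x i| ^ p + |2 * y i| ^ p)/2 := by
    intro i
    rw [hm, ← h1r]
    exact my_rpow_rpow_inv hr0.ne' (by
      have := Real.rpow_nonneg (abs_nonneg (2 * x i)) p
      have := Real.rpow_nonneg (abs_nonneg (2 * y i)) p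
      linarith)
  have habs2 : ∀ a : ℝ, |2 * a| ^ p = 2^p * |a| ^ p := fun a => by
    rw [abs_mul, abs_two, Real.mul_rpow two_pos.le (abs_nonneg a)]
  have hsum_m : ∑ i, (m i) ^ r = 2^p * ((A + B)/2) := by
    rw [Finset.sum_congr rfl fun i _ => hmr i]
    simp only [habs2]
    rw [← Finset.sum_div, Finset.sum_add_distrib, ← Finset.mul_sum, ← Finset.mul_sum, ← hA, ← hB]
    ring
  have hNm : (∑ i, (m i) ^ r) ^ (1/r) = 4 * ((A + B)/2) ^ (2/p) := by
    rw [hsum_m, h1r, Real.mul_rpow (by positivity) (by positivity),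
      ← Real.rpow_mul two_pos.le, show p * (2/p) = ((2:ℕ):ℝ) by push_cast; field_simp,
      Real.rpow_natCast]
    norm_num
  rw [hNm]
  -- convexity of t ↦ t^(2/p)
  have hconv := (convexOn_rpow (p := 2/p) (by
      rw [le_div_iff₀ hp0]; linarith : (1:ℝ) ≤ 2/p)).2
    (Set.mem_Ici.2 hAn) (Set.mem_Ici.2 hBn)
    (by norm_num : (0:ℝ) ≤ 1/2) (by norm_num : (0:ℝ) ≤ 1/2) (by norm_num)
  simp only [smul_eq_mul] at hconv
  rw [pNorm_sq' hp0 x, pNorm_sq' hp0 y, ← hA, ← hB]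
  have harg : (1/2) * A + (1/2) * B = (A + B)/2 := by ring
  rw [harg] at hconv
  nlinarith [hconv]

open Filter Topology in
lemma midpoint_to_full {F : ℝ → ℝ} (hc : Continuous F)
    (hm : ∀ a b : ℝ, F ((a+b)/2) ≤ (F a + F b)/2) :
    ∀ t : ℝ, 0 ≤ t → t ≤ 1 → F t ≤ t * F 1 + (1-t) * F 0 := by
  set G : ℝ → ℝ := fun t => t * F 1 + (1-t) * F 0 - F t with hG
  have hGc : Continuous G := by
    rw [hG]; fun_prop
  have hGm : ∀ a b : ℝ, (G a + G b)/2 ≤ G ((a+b)/2) := by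
    intro a b
    have h := hm a b
    have key : (a+b)/2 * F 1 + (1-(a+b)/2) * F 0 =
        ((a * F 1 + (1-a) * F 0) + (b * F 1 + (1-b) * F 0))/2 := by ring
    simp only [hG]
    rw [key]
    linarith
  have dyadic : ∀ n : ℕ, ∀ k : ℕ, k ≤ 2^n → 0 ≤ G ((k : ℝ)/2^n) := by
    intro n
    induction n with
    | zero =>
      intro k hk
      interval_cases k
      · norm_num [hG]
      · norm_num [hG]
    | succ n ih =>
      intro k hk
      have h2 : (2:ℕ)^(n+1) = 2 * 2^n := by ring
      rcases Nat.even_or_odd k with ⟨m, hm2⟩ | ⟨m, hm2⟩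
      · have hm' : m ≤ 2^n := by omega
        have heq : ((k:ℝ)/2^(n+1)) = (m:ℝ)/2^n := by
          subst hm2; push_cast; rw [pow_succ]; field_simp; ring
        rw [heq]
        exact ih m hm'
      · have hm' : m + 1 ≤ 2^n := by omega
        have heq : ((k:ℝ)/2^(n+1)) = (((m:ℝ)/2^n) + (((m+1:ℕ)):ℝ)/2^n)/2 := by
          subst hm2; push_cast; rw [pow_succ]; field_simp; ring
        rw [heq]
        have hmm := hGm ((m:ℝ)/2^n) ((((m+1:ℕ)):ℝ)/2^n)
        have i1 := ih m (by omega)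
        have i2 := ih (m+1) hm'
        linarith
  intro t ht0 ht1
  set f : ℕ → ℝ := fun n => ((⌊t * 2^n⌋₊ : ℕ):ℝ)/2^n with hf
  have hpow : ∀ n : ℕ, (0:ℝ) < 2^n := fun n => by positivity
  have hfle : ∀ n, f n ≤ t := by
    intro n
    rw [hf]
    have := Nat.floor_le (by positivity : (0:ℝ) ≤ t * 2^n)
    rw [div_le_iff₀ (hpow n)]
    exact this
  have hfge : ∀ n, t - (1/2)^n ≤ f n := by
    intro n
    rw [hf]
    have := Nat.lt_floor_add_one (t * 2^n)
    rw [sub_le_iff_le_add, div_add' _ _ _ (hpow n).ne', le_div_iff₀ (hpow n)]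
    have hhalf : ((1:ℝ)/2)^n * 2^n = 1 := by
      rw [← mul_pow]; norm_num
    nlinarith [this]
  have htend : Tendsto f atTop (nhds t) := by
    have hlow : Tendsto (fun n : ℕ => t - (1/2)^n) atTop (nhds t) := by
      have := tendsto_pow_atTop_nhds_zero_of_lt_one (by norm_num : (0:ℝ) ≤ 1/2)
        (by norm_num : (1:ℝ)/2 < 1)
      simpa using (tendsto_const_nhds (x := t)).sub this
    exact tendsto_of_tendsto_of_tendsto_of_le_of_le hlow tendsto_const_nhds hfge hfle
  have hGnn : ∀ n, 0 ≤ G (f n) := by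
    intro n
    apply dyadic n
    have : t * 2^n ≤ ((2^n : ℕ):ℝ) := by
      push_cast
      nlinarith [hpow n]
    calc ⌊t * 2^n⌋₊ ≤ ⌊((2^n : ℕ):ℝ)⌋₊ := Nat.floor_le_floor this
      _ = 2^n := Nat.floor_natCast _
  have hGt : 0 ≤ G t :=
    ge_of_tendsto ((hGc.continuousAt.tendsto).comp htend) (Filter.Eventually.of_forall hGnn)
  simp only [hG] at hGt
  linarith

lemma pNorm_smul {d : ℕ} {p : ℝ} (hp : 0 < p) (c : ℝ) (z : Fin d → ℝ) :
    pNorm p (c • z) = |c| * pNorm p z := by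
  rw [pNorm, pNorm]
  have hterm : ∀ i, |(c • z) i| ^ p = |c| ^ p * |z i| ^ p := by
    intro i
    rw [Pi.smul_apply, smul_eq_mul, abs_mul, Real.mul_rpow (abs_nonneg c) (abs_nonneg (z i))]
  rw [Finset.sum_congr rfl fun i _ => hterm i, ← Finset.mul_sum,
    Real.mul_rpow (Real.rpow_nonneg (abs_nonneg c) p) (sum_abs_rpow_nonneg p z),
    my_rpow_inv_rpow hp.ne' (abs_nonneg c)]

lemma pNorm_cont {d : ℕ} {p : ℝ} (hp : 0 < p) : Continuous (pNorm (d := d) p) := by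
  have hsum : Continuous fun z : Fin d → ℝ => ∑ i, |z i| ^ p :=
    continuous_finset_sum _ fun i _ => continuous_iff_continuousAt.2 fun z =>
      ContinuousAt.rpow_const ((continuous_apply i).abs.continuousAt) (Or.inr hp.le)
  exact continuous_iff_continuousAt.2 fun z =>
    ContinuousAt.rpow_const hsum.continuousAt (Or.inr (by positivity))


/-- Strong convexity of the squared `p`-norm: for `p ∈ (1,2]`, the function
`x ↦ (1/2)‖x‖_p²` is `(p-1)`-strongly convex with respect to `‖·‖_p`. -/
theorem half_sq_pnorm_strongly_convex
    {d : ℕ} (p : ℝ) (hp1 : 1 < p) (hp2 : p ≤ 2) :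
    ∀ (x y : Fin d → ℝ) (t : ℝ), 0 ≤ t → t ≤ 1 →
      (1 / 2) * (pNorm p (t • x + (1 - t) • y)) ^ 2 ≤
        t * ((1 / 2) * (pNorm p x) ^ 2) + (1 - t) * ((1 / 2) * (pNorm p y) ^ 2) -
          ((p - 1) / 2) * t * (1 - t) * (pNorm p (x - y)) ^ 2 := by
  intro x y t ht0 ht1
  have hp0 : (0:ℝ) < p := by linarith
  set D := pNorm p (x - y) ^ 2 with hD
  set X : ℝ → (Fin d → ℝ) := fun s => s • x + (1-s) • y with hX
  set F : ℝ → ℝ := fun s => (1/2) * pNorm p (X s) ^ 2 - ((p-1)/2) * s^2 * D with hF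
  have hXc : Continuous X := by
    rw [hX]
    exact (continuous_id.smul continuous_const).add
      ((continuous_const.sub continuous_id).smul continuous_const)
  have hFc : Continuous F := by
    have h1 : Continuous fun s => pNorm p (X s) := (pNorm_cont hp0).comp hXc
    rw [hF]
    exact (continuous_const.mul (h1.pow 2)).sub
      ((continuous_const.mul (continuous_pow 2)).mul continuous_const)
  have hFm : ∀ a b : ℝ, F ((a+b)/2) ≤ (F a + F b)/2 := by
    intro a b
    have hXmid : X ((a+b)/2) = (2⁻¹ : ℝ) • (X a + X b) := by
      funext i
      simp only [hX, Pi.add_apply, Pi.smul_apply, smul_eq_mul]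
      ring
    have hXsub : X a - X b = (a - b) • (x - y) := by
      funext i
      simp only [hX, Pi.add_apply, Pi.sub_apply, Pi.smul_apply, smul_eq_mul]
      ring
    have pNmid : pNorm p (X ((a+b)/2)) ^ 2 = (1/4) * pNorm p (X a + X b) ^ 2 := by
      rw [hXmid, pNorm_smul hp0, mul_pow]
      norm_num
    have pNsub : pNorm p (X a - X b) ^ 2 = (a-b)^2 * D := by
      rw [hXsub, pNorm_smul hp0, mul_pow, sq_abs, hD]
    have hK := midD hp1 hp2 (X a) (X b)
    rw [pNsub] at hK
    simp only [hF]
    rw [pNmid]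
    nlinarith [hK]
  have hfull := midpoint_to_full hFc hFm t ht0 ht1
  have hX1 : X 1 = x := by
    funext i
    simp [hX]
  have hX0 : X 0 = y := by
    funext i
    simp [hX]
  simp only [hF, hX1, hX0] at hfull
  have hXt : X t = t • x + (1 - t) • y := rfl
  rw [hXt] at hfull
  nlinarith [hfull]
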